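/- (Reconstruction for the NMSR construction, d = 2k−2.) Let q be a prime power, m, k, n positive integers with k ≥ 2 and 2k−2 ≤ n−1. Let g = gcd(k−1, q^m−1), let γ be a primitive element of F_{q^m} (an element of multiplicative order q^m−1), and let i_1, …, i_n ∈ {0, 1, …, (q^m−1)/g − 1} be integers no two of which lie in the same q-cyclotomic coset modulo (q^m−1)/g. Let θ : F_{q^m} → M_m(F_q) be an injective F_q-algebra homomorphism, set γ_j = γ^{i_j}, and for j ∈ {1,…,n} let Φ_j = ( θ(γ_j^0) | ⋯ | θ(γ_j^{k−2}) ) and M_j = ( Φ_j | θ(γ_j^{k−1})·Φ_j ). Suppose X = [S_1; S_2] and X' = [S_1'; S_2'], where S_1, S_2, S_1', S_2' ∈ F_q^{m(k−1)×m(k−1)} are symmetric. Then for every subset K ⊆ {1,…,n} with |K| = k: if M_j·X = M_j·X' for all j ∈ K, then S_1 = S_1' and S_2 = S_2'. (Hence the file is determined by the contents of any k storage nodes.) -/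

import Mathlib

open Matrix

/-- `phiRow θ g = ( θ(g^0) | θ(g^1) | ⋯ | θ(g^(κ-1)) )`, an `m × mκ` matrix. -/
def phiRow {F E : Type*} [Semiring F] [Semiring E] {m κ : ℕ}
    (θ : E →+* Matrix (Fin m) (Fin m) F) (g : E) :
    Matrix (Fin m) (Fin κ × Fin m) F :=
  fun a p => θ (g ^ (p.1 : ℕ)) a p.2

/-- The NMSR encoding row `M_j = ( Φ_j | θ(g^(k-1))·Φ_j )` with `Φ_j = phiRow θ g`
consisting of `κ = k - 1` blocks. -/
def nmsrRow {F E : Type*} [Semiring F] [Semiring E] {m κ : ℕ}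
    (θ : E →+* Matrix (Fin m) (Fin m) F) (k : ℕ) (g : E) :
    Matrix (Fin m) ((Fin κ × Fin m) ⊕ (Fin κ × Fin m)) F :=
  Matrix.fromCols (phiRow θ g) (θ (g ^ (k - 1)) * phiRow θ g)

/-- The `q`-cyclotomic coset of `s` modulo `m'`, as a subset of `ZMod m'`. -/
def cyclotomicCoset (q m' s : ℕ) : Set (ZMod m') :=
  {x : ZMod m' | ∃ r : ℕ, x = (s : ZMod m') * (q : ZMod m') ^ r}

open Polynomial

section Blockify

variable {F E : Type*} [Semiring F] [Semiring E] {m : ℕ}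

def blockify (θ : E →+* Matrix (Fin m) (Fin m) F) {a b : ℕ}
    (V : Matrix (Fin a) (Fin b) E) : Matrix (Fin a × Fin m) (Fin b × Fin m) F :=
  fun p r => θ (V p.1 r.1) p.2 r.2

lemma blockify_mul (θ : E →+* Matrix (Fin m) (Fin m) F) {a b c : ℕ}
    (V : Matrix (Fin a) (Fin b) E) (W : Matrix (Fin b) (Fin c) E) :
    blockify θ (V * W) = blockify θ V * blockify θ W := by
  ext ⟨i, x⟩ ⟨j, y⟩
  simp only [blockify, Matrix.mul_apply, Fintype.sum_prod_type, map_sum]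
  rw [Matrix.sum_apply]  -- maybe not needed
  refine Finset.sum_congr rfl fun l _ => ?_
  simp [Matrix.mul_apply]

lemma blockify_one (θ : E →+* Matrix (Fin m) (Fin m) F) {a : ℕ} :
    blockify θ (1 : Matrix (Fin a) (Fin a) E) = 1 := by
  ext ⟨i, x⟩ ⟨j, y⟩
  simp only [blockify, Matrix.one_apply]
  by_cases hij : i = j
  · subst hij
    simp [Matrix.one_apply, Prod.ext_iff]
  · simp [Prod.ext_iff, hij]

end Blockify

lemma vandermonde_block_cancel {F E : Type*} [Field F] [Field E] {m κ : ℕ}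
    (θ : E →+* Matrix (Fin m) (Fin m) F) (v : Fin κ → E) (hv : Function.Injective v)
    {ι : Type*} (Y : Matrix (Fin κ × Fin m) ι F)
    (hY : ∀ r, phiRow (κ := κ) θ (v r) * Y = 0) : Y = 0 := by
  classical
  set V : Matrix (Fin κ) (Fin κ) E := Matrix.vandermonde v
  have hdet : V.det ≠ 0 := Matrix.det_vandermonde_ne_zero_iff.mpr hv
  have hVinv : V⁻¹ * V = 1 := Matrix.nonsing_inv_mul V (by simpa using hdet)
  have hzero : blockify θ V * Y = 0 := by
    ext ⟨r, x⟩ c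
    have := congrFun (congrFun (hY r) x) c
    simp only [Matrix.mul_apply, Fintype.sum_prod_type, Matrix.zero_apply] at this ⊢
    exact this
  calc Y = (blockify θ V⁻¹ * blockify θ V) * Y := by
        rw [← blockify_mul, hVinv, blockify_one, Matrix.one_mul]
    _ = blockify θ V⁻¹ * (blockify θ V * Y) := Matrix.mul_assoc _ _ _
    _ = 0 := by rw [hzero, Matrix.mul_zero]

lemma aeval_transpose {F : Type*} [CommRing F] {ι : Type*} [Fintype ι] [DecidableEq ι]
    (p : F[X]) (A : Matrix ι ι F) :
    Polynomial.aeval Aᵀ p = (Polynomial.aeval A p)ᵀ := by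
  induction p using Polynomial.induction_on' with
  | add p q hp hq => simp [hp, hq, Matrix.transpose_add]
  | monomial n c =>
      rw [Polynomial.aeval_monomial, Polynomial.aeval_monomial, Matrix.transpose_mul,
        Matrix.transpose_pow]
      rw [show ((algebraMap F (Matrix ι ι F)) c)ᵀ = (algebraMap F (Matrix ι ι F)) c by
        rw [Algebra.algebraMap_eq_smul_one, Matrix.transpose_smul, Matrix.transpose_one]]
      exact Algebra.commutes (A := Matrix ι ι F) c (Aᵀ ^ n)

lemma sylvester_cancel {F E : Type*} [Field F] [Field E] [Algebra F E] {m : ℕ}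
    (θ : E →ₐ[F] Matrix (Fin m) (Fin m) F) (a b : E)
    (hab : Polynomial.aeval b (minpoly F a) ≠ 0)
    (X : Matrix (Fin m) (Fin m) F) (hX : θ a * X = X * (θ b)ᵀ) : X = 0 := by
  have hpow : ∀ i : ℕ, (θ a) ^ i * X = X * ((θ b)ᵀ) ^ i := by
    intro i
    induction i with
    | zero => simp
    | succ i ih =>
        rw [pow_succ, pow_succ, Matrix.mul_assoc, hX, ← Matrix.mul_assoc, ih, Matrix.mul_assoc]
  have haeval : ∀ p : F[X], Polynomial.aeval (θ a) p * X = X * Polynomial.aeval ((θ b)ᵀ) p := by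
    intro p
    rw [Polynomial.aeval_eq_sum_range, Polynomial.aeval_eq_sum_range, Finset.sum_mul,
      Finset.mul_sum]
    refine Finset.sum_congr rfl fun i _ => ?_
    rw [Matrix.smul_mul, Matrix.mul_smul, hpow i]
  have h0 : X * Polynomial.aeval ((θ b)ᵀ) (minpoly F a) = 0 := by
    rw [← haeval, Polynomial.aeval_algHom_apply, minpoly.aeval, map_zero, Matrix.zero_mul]
  set c : E := Polynomial.aeval b (minpoly F a) with hc
  have hbc : Polynomial.aeval ((θ b)ᵀ) (minpoly F a) = (θ c)ᵀ := by
    rw [aeval_transpose, Polynomial.aeval_algHom_apply]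
  rw [hbc] at h0
  have hcinv : (θ c)ᵀ * (θ c⁻¹)ᵀ = 1 := by
    rw [← Matrix.transpose_mul, ← _root_.map_mul, inv_mul_cancel₀ hab, _root_.map_one, Matrix.transpose_one]
  calc X = X * ((θ c)ᵀ * (θ c⁻¹)ᵀ) := by rw [hcinv, Matrix.mul_one]
    _ = (X * (θ c)ᵀ) * (θ c⁻¹)ᵀ := (Matrix.mul_assoc _ _ _).symm
    _ = 0 := by rw [h0, Matrix.zero_mul]

lemma minpoly_root_conj {F E : Type*} [Field F] [Field E] [Fintype F] [Fintype E] [Algebra F E]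
    {q : ℕ} (hF : Fintype.card F = q)
    {a b : E} (hb : Polynomial.aeval b (minpoly F a) = 0) :
    ∃ r : ℕ, b = a ^ q ^ r := by
  classical
  set p : ℕ := ringChar F with hpdef
  obtain ⟨v, hp, hqcard⟩ := FiniteField.card F p
  have hq : q = p ^ (v : ℕ) := by rw [← hF, hqcard]
  have hq2 : 2 ≤ q := by
    rw [hq]
    calc 2 ≤ p := hp.two_le
    _ = p ^ 1 := (pow_one p).symm
    _ ≤ p ^ (v : ℕ) := Nat.pow_le_pow_right hp.pos v.2
  haveI hpfact : Fact p.Prime := ⟨hp⟩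
  haveI hcharE : CharP E p := charP_of_injective_algebraMap (algebraMap F E).injective p
  haveI : Module.Finite F E := Module.Finite.of_finite
  have ha : IsIntegral F a := IsIntegral.of_finite F a
  set P : Polynomial F := minpoly F a with hP
  set d : ℕ := P.natDegree with hd
  have hdpos : 0 < d := minpoly.natDegree_pos ha
  -- iterated q-power maps
  have hqe' : ∀ e : ℕ, q ^ e = p ^ ((v : ℕ) * e) := by
    intro e; rw [hq, ← pow_mul]
  have hτ : ∀ e : ℕ, ∀ x : E, iterateFrobenius E p ((v : ℕ) * e) x = x ^ q ^ e := by
    intro e x; rw [iterateFrobenius_def, hqe' e]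
  have hfrobF : ∀ c : F, (algebraMap F E c) ^ q = algebraMap F E c := by
    intro c
    rw [← map_pow]
    congr 1
    rw [← hF]
    exact FiniteField.pow_card c
  have hqiter : ∀ y : E, y ^ q = y → ∀ e : ℕ, y ^ q ^ e = y := by
    intro y hy e
    induction e with
    | zero => simp
    | succ e ih => rw [pow_succ, pow_mul, ih, hy]
  -- the q-power map as an F-algebra endomorphism
  have σcomm : ∀ c : F, (iterateFrobenius E p ((v : ℕ) * 1)) (algebraMap F E c)
      = algebraMap F E c := by
    intro c; rw [hτ 1, pow_one]; exact hfrobF c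
  set σ : E →ₐ[F] E := { toRingHom := iterateFrobenius E p ((v : ℕ) * 1), commutes' := σcomm }
    with hσ
  have hσx : ∀ x : E, σ x = x ^ q := by
    intro x
    show iterateFrobenius E p ((v : ℕ) * 1) x = x ^ q
    rw [hτ 1, pow_one]
  have hrootq : ∀ x : E, Polynomial.aeval x P = 0 → Polynomial.aeval (x ^ q) P = 0 := by
    intro x hx
    rw [← hσx, Polynomial.aeval_algHom_apply, hx, map_zero]
  have hroots : ∀ r : ℕ, Polynomial.aeval (a ^ q ^ r) P = 0 := by
    intro r
    induction r with
    | zero =>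
        rw [pow_zero, pow_one]
        exact minpoly.aeval F a
    | succ r ih =>
        have := hrootq _ ih
        rwa [← pow_mul, ← pow_succ] at this
  -- injectivity of r ↦ a ^ q ^ r on Iio d
  have hlt : ∀ r r' : ℕ, r < r' → r' < d → a ^ q ^ r = a ^ q ^ r' → False := by
    intro r r' hrr' hr'd heq
    set e : ℕ := r' - r with he
    have he1 : 1 ≤ e := Nat.le_sub_of_add_le (by omega)
    have hed : e < d := by omega
    have hfrobinj : Function.Injective (fun x : E => x ^ q ^ r) := by
      have := (iterateFrobenius E p ((v : ℕ) * r)).injective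
      intro x y hxy
      apply this
      rw [hτ r, hτ r]
      exact hxy
    have hae : a ^ q ^ e = a := by
      apply hfrobinj
      show (a ^ q ^ e) ^ q ^ r = a ^ q ^ r
      rw [← pow_mul, ← pow_add]
      rw [show e + r = r' by omega]
      exact heq.symm
    -- every element of F⟮a⟯ is fixed by x ↦ x ^ q ^ e
    have hfix : ∀ x ∈ IntermediateField.adjoin F {a}, x ^ q ^ e = x := by
      intro x hx
      induction hx using IntermediateField.adjoin_induction with
      | mem y hy =>
          rw [Set.mem_singleton_iff] at hy
          rw [hy]; exact hae
      | algebraMap c => exact hqiter _ (hfrobF c) e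
      | add x y hx hy ihx ihy =>
          have := map_add (iterateFrobenius E p ((v : ℕ) * e)) x y
          rw [hτ, hτ, hτ] at this
          rw [this, ihx, ihy]
      | inv x hx ihx =>
          have := map_inv₀ (iterateFrobenius E p ((v : ℕ) * e)) x
          rw [hτ, hτ] at this
          rw [this, ihx]
      | mul x y hx hy ihx ihy =>
          have := map_mul (iterateFrobenius E p ((v : ℕ) * e)) x y
          rw [hτ, hτ, hτ] at this
          rw [this, ihx, ihy]
    -- counting
    haveI : Fintype ↥(IntermediateField.adjoin F {a}) := Fintype.ofFinite _
    have hcardK : Fintype.card ↥(IntermediateField.adjoin F {a}) = q ^ d := by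
      rw [Module.card_eq_pow_finrank (K := F), hF, IntermediateField.adjoin.finrank ha]
    set f : Polynomial E := Polynomial.X ^ q ^ e - Polynomial.X with hf
    have hqe2 : 2 ≤ q ^ e := le_trans hq2 (Nat.le_self_pow (by omega) q)
    have hfdeg : f.natDegree = q ^ e := by
      rw [hf]
      rw [Polynomial.natDegree_sub_eq_left_of_natDegree_lt] <;>
        simp [Polynomial.natDegree_X_pow, Polynomial.natDegree_X] <;> omega
    have hf0 : f ≠ 0 := Polynomial.ne_zero_of_natDegree_gt (n := 0) (by omega)
    have hmem : ∀ x : ↥(IntermediateField.adjoin F {a}), (x : E) ∈ f.roots.toFinset := by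
      intro x
      rw [Multiset.mem_toFinset, Polynomial.mem_roots hf0]
      simp only [Polynomial.IsRoot, hf, Polynomial.eval_sub, Polynomial.eval_pow,
        Polynomial.eval_X]
      rw [hfix x.1 x.2, sub_self]
    have hinj2 : Function.Injective
        (fun x : ↥(IntermediateField.adjoin F {a}) => (⟨x.1, hmem x⟩ : ↥(f.roots.toFinset))) := by
      intro x y hxy
      exact Subtype.ext (Subtype.mk_eq_mk.mp hxy)
    have hle := Fintype.card_le_of_injective _ hinj2
    rw [hcardK, Fintype.card_coe] at hle
    have : (f.roots.toFinset).card ≤ q ^ e := by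
      calc (f.roots.toFinset).card ≤ Multiset.card f.roots := Multiset.toFinset_card_le _
      _ ≤ f.natDegree := Polynomial.card_roots' f
      _ = q ^ e := hfdeg
    have : q ^ d ≤ q ^ e := le_trans hle this
    have : q ^ e < q ^ d := Nat.pow_lt_pow_right (by omega) hed
    omega
  -- finish: roots of P in E are exactly the a ^ q ^ r, r < d
  set Pm : Polynomial E := P.map (algebraMap F E) with hPm
  have hPm0 : Pm ≠ 0 := Polynomial.map_ne_zero (minpoly.ne_zero ha)
  have hmemroots : ∀ x : E, Polynomial.aeval x P = 0 → x ∈ Pm.roots.toFinset := by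
    intro x hx
    rw [Multiset.mem_toFinset, Polynomial.mem_roots hPm0]
    rwa [Polynomial.IsRoot, Polynomial.eval_map, ← Polynomial.aeval_def]
  set S : Finset E := (Finset.range d).image (fun r => a ^ q ^ r) with hS
  have hScard : S.card = d := by
    rw [hS, Finset.card_image_of_injOn, Finset.card_range]
    intro r hr r' hr' heq
    rw [Finset.mem_coe, Finset.mem_range] at hr hr'
    rcases lt_trichotomy r r' with h | h | h
    · exact absurd heq (fun heq => hlt r r' h hr' heq)
    · exact h
    · exact absurd heq.symm (fun heq => hlt r' r h hr heq)
  have hsub : S ⊆ Pm.roots.toFinset := by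
    intro x hx
    rw [hS, Finset.mem_image] at hx
    obtain ⟨r, _, rfl⟩ := hx
    exact hmemroots _ (hroots r)
  have hTcard : Pm.roots.toFinset.card ≤ d := by
    calc Pm.roots.toFinset.card ≤ Multiset.card Pm.roots := Multiset.toFinset_card_le _
    _ ≤ Pm.natDegree := Polynomial.card_roots' Pm
    _ = d := by rw [hPm, Polynomial.natDegree_map]
  have hST : S = Pm.roots.toFinset :=
    Finset.eq_of_subset_of_card_le hsub (by omega)
  have hbS : b ∈ S := by rw [hST]; exact hmemroots b hb
  rw [hS, Finset.mem_image] at hbS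
  obtain ⟨r, _, hr⟩ := hbS
  exact ⟨r, hr.symm⟩

theorem stmt9 (q m k n : ℕ) (hq : IsPrimePow q) (hm : 0 < m) (hk : 2 ≤ k)
    (hn : 0 < n) (hdn : 2 * k - 2 ≤ n - 1)
    (F E : Type*) [Field F] [Field E] [Fintype F] [Fintype E] [Algebra F E]
    (hF : Fintype.card F = q) (hE : Fintype.card E = q ^ m)
    (θ : E →ₐ[F] Matrix (Fin m) (Fin m) F) (hθ : Function.Injective θ)
    (γ : E) (hγ : orderOf γ = q ^ m - 1)
    (idx : Fin n → ℕ)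
    (hidx : ∀ j, idx j < (q ^ m - 1) / Nat.gcd (k - 1) (q ^ m - 1))
    (hcosets : ∀ j j' : Fin n, j ≠ j' →
      cyclotomicCoset q ((q ^ m - 1) / Nat.gcd (k - 1) (q ^ m - 1)) (idx j) ≠
        cyclotomicCoset q ((q ^ m - 1) / Nat.gcd (k - 1) (q ^ m - 1)) (idx j'))
    (S₁ S₂ S₁' S₂' : Matrix (Fin (k - 1) × Fin m) (Fin (k - 1) × Fin m) F)
    (hS₁ : S₁.IsSymm) (hS₂ : S₂.IsSymm) (hS₁' : S₁'.IsSymm) (hS₂' : S₂'.IsSymm)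
    (Kset : Finset (Fin n)) (hKset : Kset.card = k)
    (h : ∀ j ∈ Kset,
      nmsrRow θ.toRingHom k (γ ^ idx j) * Matrix.fromRows S₁ S₂ =
        nmsrRow θ.toRingHom k (γ ^ idx j) * Matrix.fromRows S₁' S₂') :
    S₁ = S₁' ∧ S₂ = S₂' := by
  classical
  have hq2 : 2 ≤ q := hq.two_le
  set N : ℕ := q ^ m - 1 with hNdef
  set g0 : ℕ := Nat.gcd (k - 1) N with hg0def
  set m' : ℕ := N / g0 with hm'def
  have hqm2 : 2 ≤ q ^ m := le_trans hq2 (Nat.le_self_pow (by omega) q)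
  have hN1 : 1 ≤ N := by omega
  have hγ0 : γ ≠ 0 := by
    intro h0
    have h1 := pow_orderOf_eq_one γ
    rw [hγ, h0, zero_pow (by omega : N ≠ 0)] at h1
    exact zero_ne_one h1
  set γu : Eˣ := Units.mk0 γ hγ0 with hγudef
  have hγu : orderOf γu = N := by
    have hval : (γu : E) = γ := rfl
    rw [← hγ, ← hval, orderOf_units]
  have hg0pos : 0 < g0 := Nat.gcd_pos_of_pos_right _ (by omega)
  have hm'1 : 1 ≤ m' :=
    (Nat.one_le_div_iff hg0pos).mpr (Nat.le_of_dvd (by omega) (Nat.gcd_dvd_right _ _))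
  have hm'N : m' ≤ N := Nat.div_le_self _ _
  have hnedistinct : ∀ j j' : Fin n, j ≠ j' → ((idx j : ZMod m') ≠ (idx j' : ZMod m')) := by
    intro j j' hjj' heq
    apply hcosets j j' hjj'
    unfold cyclotomicCoset
    rw [heq]
  have hm'2 : 2 ≤ m' := by
    by_contra hcon
    have hm'eq : m' = 1 := by omega
    have hn3 : 3 ≤ n := by omega
    haveI : Subsingleton (ZMod m') := hm'eq ▸ (inferInstance : Subsingleton (ZMod 1))
    exact hnedistinct ⟨0, by omega⟩ ⟨1, by omega⟩ (by simp [Fin.ext_iff])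
      (Subsingleton.elim _ _)
  haveI : NeZero m' := ⟨by omega⟩
  -- coprimality of q and m'
  have hcopN : Nat.Coprime q N := by
    have hd1 : Nat.gcd q N ∣ q ^ m :=
      dvd_trans (Nat.gcd_dvd_left q N) (dvd_pow_self q (by omega))
    have hd3 : Nat.gcd q N ∣ q ^ m - N := Nat.dvd_sub hd1 (Nat.gcd_dvd_right q N)
    rw [show q ^ m - N = 1 by omega] at hd3
    exact Nat.dvd_one.mp hd3
  have hcop : Nat.Coprime q m' := by
    refine Nat.Coprime.coprime_dvd_right ?_ hcopN
    exact ⟨g0, (Nat.div_mul_cancel (Nat.gcd_dvd_right (k-1) N)).symm⟩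
  -- a positive exponent with q^E = 1 mod m'
  obtain ⟨Eexp, hE1, hEq⟩ : ∃ Eexp : ℕ, 1 ≤ Eexp ∧ (q : ZMod m') ^ Eexp = 1 := by
    refine ⟨orderOf (ZMod.unitOfCoprime q hcop), orderOf_pos _, ?_⟩
    have := pow_orderOf_eq_one (ZMod.unitOfCoprime q hcop)
    have h2 := congrArg (Units.val) this
    rw [Units.val_pow_eq_pow_val, ZMod.coe_unitOfCoprime] at h2
    exact h2
  -- coset equality from a power relation
  have hcoseteq : ∀ (s t : ℕ) (r : ℕ), ((t : ZMod m') = (s : ZMod m') * (q : ZMod m') ^ r) →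
      cyclotomicCoset q m' s = cyclotomicCoset q m' t := by
    intro s t r ht
    ext x
    simp only [cyclotomicCoset, Set.mem_setOf_eq]
    constructor
    · rintro ⟨w, rfl⟩
      refine ⟨w + r * (Eexp - 1), ?_⟩
      rw [ht, mul_assoc, ← pow_add]
      congr 1
      have h1 : r * Eexp = r * (Eexp - 1) + r := by
        calc r * Eexp = r * ((Eexp - 1) + 1) := by rw [Nat.sub_add_cancel hE1]
        _ = r * (Eexp - 1) + r := by ring
      have h2 : r * Eexp = Eexp * r := Nat.mul_comm _ _
      rw [show r + (w + r * (Eexp - 1)) = w + Eexp * r by omega, pow_add, pow_mul, hEq,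
        one_pow, mul_one]
    · rintro ⟨w, rfl⟩
      exact ⟨r + w, by rw [ht, mul_assoc, ← pow_add]⟩
  -- power relation in E gives relation mod m'
  have hmodrel : ∀ (j j' : Fin n) (r : ℕ),
      (γ ^ idx j') ^ (k - 1) = ((γ ^ idx j) ^ (k - 1)) ^ q ^ r →
      ((idx j' : ZMod m') = (idx j : ZMod m') * (q : ZMod m') ^ r) := by
    intro j j' r hrel
    rw [← pow_mul, ← pow_mul, ← pow_mul] at hrel
    -- lift to units
    have hurel : γu ^ (idx j' * (k - 1)) = γu ^ (idx j * (k - 1) * q ^ r) := by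
      apply Units.ext
      rw [Units.val_pow_eq_pow_val, Units.val_pow_eq_pow_val, hγudef, Units.val_mk0]
      rw [← mul_assoc] at hrel
      exact hrel
    have hmodN : idx j' * (k - 1) ≡ idx j * (k - 1) * q ^ r [MOD N] := by
      rw [← hγu]
      exact pow_eq_pow_iff_modEq.mp hurel
    have hmodN' : (k - 1) * idx j' ≡ (k - 1) * (idx j * q ^ r) [MOD N] := by
      calc (k - 1) * idx j' = idx j' * (k - 1) := by ring
      _ ≡ idx j * (k - 1) * q ^ r [MOD N] := hmodN
      _ = (k - 1) * (idx j * q ^ r) := by ring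
    have hmodm' : idx j' ≡ idx j * q ^ r [MOD m'] := by
      have := Nat.ModEq.cancel_left_div_gcd (by omega : 0 < N) hmodN'
      rwa [Nat.gcd_comm N (k - 1), ← hg0def, ← hm'def] at this
    have := (ZMod.natCast_eq_natCast_iff _ _ _).mpr hmodm'
    rwa [Nat.cast_mul, Nat.cast_pow] at this
  -- non-conjugacy
  have hnonconj : ∀ j ∈ Kset, ∀ j' ∈ Kset, j ≠ j' →
      Polynomial.aeval ((γ ^ idx j') ^ (k - 1)) (minpoly F ((γ ^ idx j) ^ (k - 1))) ≠ 0 := by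
    intro j _ j' _ hjj' hroot
    obtain ⟨r, hr⟩ := minpoly_root_conj hF hroot
    exact hcosets j j' hjj' (hcoseteq (idx j) (idx j') r (hmodrel j j' r hr))
  -- matrix setup
  set Φ : Fin n → Matrix (Fin m) (Fin (k - 1) × Fin m) F :=
    fun j => phiRow θ.toRingHom (γ ^ idx j) with hΦdef
  set ee : Fin n → E := fun j => (γ ^ idx j) ^ (k - 1) with heedef
  set D₁ : Matrix (Fin (k - 1) × Fin m) (Fin (k - 1) × Fin m) F := S₁ - S₁' with hD₁def
  set D₂ : Matrix (Fin (k - 1) × Fin m) (Fin (k - 1) × Fin m) F := S₂ - S₂' with hD₂def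
  have hD₁symm : D₁ᵀ = D₁ := by rw [hD₁def, Matrix.transpose_sub, hS₁, hS₁']
  have hD₂symm : D₂ᵀ = D₂ := by rw [hD₂def, Matrix.transpose_sub, hS₂, hS₂']
  have hC1 : ∀ j ∈ Kset, Φ j * D₁ + (θ (ee j) * Φ j) * D₂ = 0 := by
    intro j hj
    have h0 := h j hj
    unfold nmsrRow at h0
    replace h0 : Φ j * S₁ + (θ (ee j) * Φ j) * S₂ = Φ j * S₁' + (θ (ee j) * Φ j) * S₂' := by
      rw [← Matrix.fromCols_mul_fromRows, ← Matrix.fromCols_mul_fromRows]; exact h0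
    have hexp : Φ j * D₁ + (θ (ee j) * Φ j) * D₂
        = (Φ j * S₁ + (θ (ee j) * Φ j) * S₂) - (Φ j * S₁' + (θ (ee j) * Φ j) * S₂') := by
      rw [hD₁def, hD₂def, Matrix.mul_sub, Matrix.mul_sub]
      abel
    rw [hexp]
    rw [sub_eq_zero]
    exact h0
  -- Step A
  have hA : ∀ j ∈ Kset, ∀ j' ∈ Kset, j ≠ j' → Φ j * D₂ * (Φ j')ᵀ = 0 := by
    intro j hj j' hj' hjj'
    have e1 : Φ j * D₁ * (Φ j')ᵀ + θ (ee j) * (Φ j * D₂ * (Φ j')ᵀ) = 0 := by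
      have := congrArg (fun M => M * (Φ j')ᵀ) (hC1 j hj)
      simp only [Matrix.add_mul, Matrix.zero_mul] at this
      rw [← this]
      rw [Matrix.mul_assoc (θ (ee j)) (Φ j) D₂, Matrix.mul_assoc (θ (ee j)) (Φ j * D₂) ((Φ j')ᵀ)]
    have e2 : Φ j' * D₁ * (Φ j)ᵀ + θ (ee j') * (Φ j' * D₂ * (Φ j)ᵀ) = 0 := by
      have := congrArg (fun M => M * (Φ j)ᵀ) (hC1 j' hj')
      simp only [Matrix.add_mul, Matrix.zero_mul] at this
      rw [← this]
      rw [Matrix.mul_assoc (θ (ee j')) (Φ j') D₂, Matrix.mul_assoc (θ (ee j')) (Φ j' * D₂) ((Φ j)ᵀ)]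
    have e2t : Φ j * D₁ * (Φ j')ᵀ + (Φ j * D₂ * (Φ j')ᵀ) * (θ (ee j'))ᵀ = 0 := by
      have := congrArg Matrix.transpose e2
      simp only [Matrix.transpose_add, Matrix.transpose_mul, Matrix.transpose_transpose,
        Matrix.transpose_zero] at this
      rw [hD₁symm, hD₂symm] at this
      simp only [Matrix.mul_assoc] at this ⊢
      exact this
    have hsyl : θ (ee j) * (Φ j * D₂ * (Φ j')ᵀ) = (Φ j * D₂ * (Φ j')ᵀ) * (θ (ee j'))ᵀ := by
      have := sub_eq_zero.mpr (e1.trans e2t.symm)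
      rw [add_sub_add_left_eq_sub] at this
      exact sub_eq_zero.mp this
    exact sylvester_cancel θ (ee j) (ee j') (hnonconj j hj j' hj' hjj') _ hsyl
  -- the vanishing machine
  have hidxinj : Function.Injective idx := by
    intro a b hab
    by_contra hne
    exact hnedistinct a b hne (by rw [hab])
  have hγpowinj : ∀ a b : Fin n, γ ^ idx a = γ ^ idx b → a = b := by
    intro a b hab
    apply hidxinj
    have ha := lt_of_lt_of_le (hidx a) hm'N
    have hb := lt_of_lt_of_le (hidx b) hm'N
    exact pow_injOn_Iio_orderOf (by rw [hγ]; exact ha) (by rw [hγ]; exact hb) hab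
  have hvanish : ∀ j₀ ∈ Kset, ∀ {ι : Type} (Y : Matrix (Fin (k - 1) × Fin m) ι F),
      (∀ j ∈ Kset, j ≠ j₀ → Φ j * Y = 0) → Y = 0 := by
    intro j₀ hj₀ ι Y hY
    have hTcard : Fintype.card ↥(Kset.erase j₀) = k - 1 := by
      rw [Fintype.card_coe, Finset.card_erase_of_mem hj₀, hKset]
    set ε : Fin (k - 1) ≃ ↥(Kset.erase j₀) := (Fintype.equivFinOfCardEq hTcard).symm with hεdef
    set v : Fin (k - 1) → E := fun r => γ ^ idx ((ε r) : Fin n) with hvdef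
    have hvinj : Function.Injective v := by
      intro r r' hrr'
      have := hγpowinj _ _ hrr'
      exact ε.injective (Subtype.ext this)
    apply vandermonde_block_cancel θ.toRingHom v hvinj Y
    intro r
    have hmem := (ε r).2
    rw [Finset.mem_erase] at hmem
    exact hY _ hmem.2 hmem.1
  obtain ⟨j₀, hj₀⟩ : ∃ j₀, j₀ ∈ Kset :=
    Finset.Nonempty.exists_mem (Finset.card_pos.mp (by omega))
  -- Step B
  have hB : ∀ j' ∈ Kset, D₂ * (Φ j')ᵀ = 0 := by
    intro j' hj'
    apply hvanish j' hj'
    intro j hj hjj'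
    rw [← Matrix.mul_assoc]
    exact hA j hj j' hj' hjj'
  have hΦD₂ : ∀ j ∈ Kset, Φ j * D₂ = 0 := by
    intro j hj
    have := congrArg Matrix.transpose (hB j hj)
    rwa [Matrix.transpose_mul, Matrix.transpose_transpose, hD₂symm,
      Matrix.transpose_zero] at this
  have hD₂0 : D₂ = 0 := hvanish j₀ hj₀ D₂ (fun j hj _ => hΦD₂ j hj)
  have hΦD₁ : ∀ j ∈ Kset, Φ j * D₁ = 0 := by
    intro j hj
    have hc := hC1 j hj
    rw [Matrix.mul_assoc, hΦD₂ j hj, Matrix.mul_zero, add_zero] at hc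
    exact hc
  have hD₁0 : D₁ = 0 := hvanish j₀ hj₀ D₁ (fun j hj _ => hΦD₁ j hj)
  exact ⟨sub_eq_zero.mp hD₁0, sub_eq_zero.mp hD₂0⟩
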